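/- Let Ω be a probability space with measure ν, and for each τ ∈ Ω let D_τ be an n×n Hermitian matrix, with τ ↦ D_τ measurable and uniformly bounded in operator norm. Let C be an n×n Hermitian matrix whose eigenvalue vector satisfies λ⃗(C) ≺_w ∫_Ω λ⃗(D_τ) dν(τ) (weak majorization of the integrated decreasingly-ordered eigenvalue vectors). Then for any non-decreasing convex function f : ℝ → [0,∞) and any k ∈ {1,…,n}: Σ_{j=1}^k λ_j(f(C)) ≤ ∫_Ω Σ_{j=1}^k λ_j(f(D_τ)) dν(τ), where f(·) is applied via functional calculus and λ_j denotes the j-th largest eigenvalue of |·|. -/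

import Mathlib

open MeasureTheory

/-- Sum of the `k` largest entries of a vector `v : Fin n → ℝ`. -/
noncomputable def kMaxSum {n : ℕ} (v : Fin n → ℝ) (k : ℕ) : ℝ :=
  sSup {x : ℝ | ∃ s : Finset (Fin n), s.card = k ∧ x = ∑ i ∈ s, v i}

open Finset

/-- Existence of a monotone nonnegative subgradient selection for a
monotone convex function on ℝ. -/
lemma exists_subgradient (f : ℝ → ℝ) (hconv : ConvexOn ℝ Set.univ f)
    (hmono : Monotone f) :
    ∃ φ : ℝ → ℝ, Monotone φ ∧ (∀ x, 0 ≤ φ x) ∧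
      ∀ x y, f x + φ x * (y - x) ≤ f y := by
  have key : ∀ a x b : ℝ, a < x → x < b →
      (f x - f a) / (x - a) ≤ (f b - f x) / (b - x) := by
    intro a x b h1 h2
    exact hconv.slope_mono_adjacent trivial trivial h1 h2
  set S : ℝ → Set ℝ := fun x => (fun a => (f x - f a) / (x - a)) '' Set.Iio x with hS
  have hne : ∀ x, (S x).Nonempty := fun x => ⟨_, ⟨x - 1, by simp, rfl⟩⟩
  have hbdd : ∀ x, BddAbove (S x) := by
    intro x
    refine ⟨(f (x+1) - f x) / (x + 1 - x), ?_⟩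
    rintro z ⟨a, ha, rfl⟩
    exact key a x (x+1) ha (by linarith)
  set φ : ℝ → ℝ := fun x => sSup (S x) with hφ
  have hle : ∀ x y, x < y → φ x ≤ (f y - f x) / (y - x) := by
    intro x y hxy
    apply csSup_le (hne x)
    rintro z ⟨a, ha, rfl⟩
    exact key a x y ha hxy
  have hge : ∀ x a, a < x → (f x - f a) / (x - a) ≤ φ x := by
    intro x a ha
    exact le_csSup (hbdd x) ⟨a, ha, rfl⟩
  refine ⟨φ, ?_, ?_, ?_⟩
  · intro x y hxy
    rcases eq_or_lt_of_le hxy with rfl | hxy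
    · exact le_rfl
    · calc φ x ≤ (f y - f x) / (y - x) := hle x y hxy
        _ ≤ φ y := hge y x hxy
  · intro x
    refine le_trans ?_ (hge x (x-1) (by linarith))
    have : f (x-1) ≤ f x := hmono (by linarith)
    have hx : (0:ℝ) < x - (x-1) := by linarith
    apply div_nonneg (by linarith) (by linarith)
  · intro x y
    rcases lt_trichotomy y x with h | rfl | h
    · have := hge x y h
      rw [div_le_iff₀ (by linarith)] at this
      nlinarith
    · simp
    · have := hle x y h
      rw [le_div_iff₀ (by linarith)] at this
      nlinarith

lemma abel_aux (c d : ℕ → ℝ) (hc : ∀ i j, i ≤ j → c j ≤ c i) :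
    ∀ k : ℕ, (∀ m ≤ k, ∑ i ∈ range m, d i ≤ 0) →
      ∑ i ∈ range k, c i * d i ≤ c k * ∑ i ∈ range k, d i := by
  intro k
  induction k with
  | zero => simp
  | succ k ih =>
    intro hd
    have h1 : ∑ i ∈ range k, c i * d i ≤ c k * ∑ i ∈ range k, d i :=
      ih (fun m hm => hd m (le_trans hm (Nat.le_succ k)))
    have hS : ∑ i ∈ range (k+1), d i ≤ 0 := hd (k+1) le_rfl
    have hck : c (k+1) ≤ c k := hc k (k+1) (Nat.le_succ k)
    rw [Finset.sum_range_succ, Finset.sum_range_succ]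
    rw [Finset.sum_range_succ] at hS
    nlinarith [mul_le_mul_of_nonpos_right hck hS]

lemma abel_le (c d : ℕ → ℝ) (hc0 : ∀ i, 0 ≤ c i) (hc : ∀ i j, i ≤ j → c j ≤ c i)
    (k : ℕ) (hd : ∀ m ≤ k, ∑ i ∈ range m, d i ≤ 0) :
    ∑ i ∈ range k, c i * d i ≤ 0 := by
  have := abel_aux c d hc k hd
  have h2 : c k * ∑ i ∈ range k, d i ≤ 0 :=
    mul_nonpos_of_nonneg_of_nonpos (hc0 k) (hd k le_rfl)
  linarith

/-- Tomić's theorem (one direction), ℕ-indexed. -/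
lemma tomic (f φ : ℝ → ℝ) (hφmono : Monotone φ) (hφ0 : ∀ x, 0 ≤ φ x)
    (hsub : ∀ x y, f x + φ x * (y - x) ≤ f y)
    (u w : ℕ → ℝ) (hu : Antitone u) (k : ℕ)
    (hsum : ∀ m ≤ k, ∑ i ∈ range m, u i ≤ ∑ i ∈ range m, w i) :
    ∑ i ∈ range k, f (u i) ≤ ∑ i ∈ range k, f (w i) := by
  have key : ∑ i ∈ range k, (φ (u i)) * (u i - w i) ≤ 0 := by
    apply abel_le _ _ (fun i => hφ0 _) (fun i j hij => hφmono (hu hij)) k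
    intro m hm
    rw [Finset.sum_sub_distrib]
    linarith [hsum m hm]
  have hterm : ∀ i, f (u i) - f (w i) ≤ φ (u i) * (u i - w i) := by
    intro i
    linarith [hsub (u i) (w i)]
  calc ∑ i ∈ range k, f (u i)
      = ∑ i ∈ range k, f (w i) + ∑ i ∈ range k, (f (u i) - f (w i)) := by
        rw [Finset.sum_sub_distrib]; ring
    _ ≤ ∑ i ∈ range k, f (w i) + ∑ i ∈ range k, φ (u i) * (u i - w i) := by
        gcongr with i hi
        exact hterm i
    _ ≤ ∑ i ∈ range k, f (w i) := by linarith

/-- Jensen's inequality via a subgradient. -/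
lemma jensen_sub {Ω : Type*} [MeasurableSpace Ω] (ν : Measure Ω)
    [IsProbabilityMeasure ν] (f φ : ℝ → ℝ)
    (hsub : ∀ x y, f x + φ x * (y - x) ≤ f y)
    (x : Ω → ℝ) (hx : Integrable x ν) (hfx : Integrable (fun τ => f (x τ)) ν) :
    f (∫ τ, x τ ∂ν) ≤ ∫ τ, f (x τ) ∂ν := by
  set m := ∫ τ, x τ ∂ν with hm
  set g : Ω → ℝ := fun τ => f m + φ m * (x τ - m) with hgdef
  have hg : Integrable g ν :=
    (integrable_const _).add ((hx.sub (integrable_const m)).const_mul _)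
  have h1 : ∀ τ, g τ ≤ f (x τ) := fun τ => hsub m (x τ)
  have h2 : (∫ τ, g τ ∂ν) ≤ ∫ τ, f (x τ) ∂ν := integral_mono hg hfx h1
  have h3 : (∫ τ, g τ ∂ν) = f m := by
    have hg2 : g = fun τ => (f m - φ m * m) + φ m * x τ := by
      funext τ; simp only [hgdef]; ring
    rw [hg2, integral_add (integrable_const _) (hx.const_mul _),
      MeasureTheory.integral_const_mul, integral_const]
    simp only [measure_univ, ENNReal.toReal_one, one_smul, ← hm, probReal_univ]
    ring
  linarith [h2, h3.symm.le]

lemma strictMono_fin_le {k n : ℕ} (g : Fin k → Fin n) (hg : StrictMono g) :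
    ∀ i : Fin k, (i : ℕ) ≤ (g i : ℕ) := by
  have H : ∀ m : ℕ, ∀ i : Fin k, (i : ℕ) = m → m ≤ (g i : ℕ) := by
    intro m
    induction m with
    | zero => intro i _; exact Nat.zero_le _
    | succ m ih =>
      intro i hi
      have hm : m < k := by omega
      have hlt : (⟨m, hm⟩ : Fin k) < i := by
        rw [Fin.lt_def]; simp; omega
      have h1 := ih ⟨m, hm⟩ rfl
      have h2 := hg hlt
      rw [Fin.lt_def] at h2
      omega
  intro i; exact H _ i rfl

lemma sum_le_sorted {n : ℕ} (w : Fin n → ℝ) (hw : Antitone w) {k : ℕ} (hk : k ≤ n)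
    (t : Finset (Fin n)) (ht : t.card = k) :
    ∑ j ∈ t, w j ≤ ∑ i : Fin k, w (Fin.castLE hk i) := by
  have h1 : ∑ j ∈ t, w j = ∑ i : Fin k, w (t.orderEmbOfFin ht i) := by
    rw [← Finset.sum_coe_sort t w]
    exact (Fintype.sum_equiv (t.orderIsoOfFin ht).toEquiv
      (fun i => w (t.orderEmbOfFin ht i)) (fun x => w x)
      (fun i => by simp [Finset.coe_orderIsoOfFin_apply])).symm
  rw [h1]
  apply Finset.sum_le_sum
  intro i _
  apply hw
  have := strictMono_fin_le _ (t.orderEmbOfFin ht).strictMono i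
  rw [Fin.le_def]
  simpa using this

lemma exists_antitone_perm {n : ℕ} (v : Fin n → ℝ) :
    ∃ π : Equiv.Perm (Fin n), Antitone (fun j => v (π j)) := by
  refine ⟨Tuple.sort (fun i => -v i), ?_⟩
  have h := Tuple.monotone_sort (fun i => -v i)
  intro a b hab
  have := h hab
  simp only [Function.comp_apply] at this
  linarith

lemma kMaxSum_eq_sorted {n : ℕ} (v : Fin n → ℝ) (π : Equiv.Perm (Fin n))
    (hw : Antitone (fun j => v (π j))) {k : ℕ} (hk : k ≤ n) :
    kMaxSum v k = ∑ i : Fin k, v (π (Fin.castLE hk i)) := by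
  have hinj : Function.Injective (fun i : Fin k => π (Fin.castLE hk i)) := by
    intro a b h
    have := π.injective h
    rwa [Fin.castLE_inj] at this
  have hgreat : IsGreatest {x : ℝ | ∃ s : Finset (Fin n), s.card = k ∧ x = ∑ i ∈ s, v i}
      (∑ i : Fin k, v (π (Fin.castLE hk i))) := by
    constructor
    · refine ⟨Finset.image (fun i : Fin k => π (Fin.castLE hk i)) Finset.univ, ?_, ?_⟩
      · rw [Finset.card_image_of_injective _ hinj, Finset.card_univ, Fintype.card_fin]
      · rw [Finset.sum_image (fun a _ b _ h => hinj h)]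
    · rintro x ⟨s, hs, rfl⟩
      have hsum : ∑ i ∈ s, v i = ∑ j ∈ s.image π.symm, v (π j) := by
        rw [Finset.sum_image (fun a _ b _ h => π.symm.injective h)]
        simp
      have htc : (s.image π.symm).card = k := by
        rw [Finset.card_image_of_injective _ π.symm.injective, hs]
      rw [hsum]
      exact sum_le_sorted _ hw hk _ htc
  exact hgreat.csSup_eq

lemma kMaxSum_succ {n : ℕ} (v : Fin n → ℝ) (π : Equiv.Perm (Fin n))
    (hw : Antitone (fun j => v (π j))) {j : ℕ} (hj : j < n) :
    kMaxSum v (j+1) = kMaxSum v j + v (π ⟨j, hj⟩) := by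
  rw [kMaxSum_eq_sorted v π hw hj.le, kMaxSum_eq_sorted v π hw hj,
    Fin.sum_univ_castSucc]
  rfl

/-- If `λ⃗(C) ≺_w ∫ λ⃗(D_τ) dν(τ)` then for every non-decreasing convex
`f : ℝ → [0,∞)` and every `k`, the Ky Fan k-norm of `f(C)` is at most the
integral of the Ky Fan k-norms of `f(D_τ)`. -/
theorem kyFan_convex_integral_average {Ω : Type*} [MeasurableSpace Ω]
    (ν : Measure Ω) [IsProbabilityMeasure ν]
    (n : ℕ) (C : Matrix (Fin n) (Fin n) ℂ) (hC : C.IsHermitian)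
    (D : Ω → Matrix (Fin n) (Fin n) ℂ) (hD : ∀ τ, (D τ).IsHermitian)
    (hbdd : ∃ M : ℝ, ∀ τ j, |(hD τ).eigenvalues j| ≤ M)
    (hint : ∀ k : ℕ, Integrable (fun τ => kMaxSum ((hD τ).eigenvalues) k) ν)
    (f : ℝ → ℝ) (hf_nonneg : ∀ x, 0 ≤ f x)
    (hf_mono : Monotone f) (hf_conv : ConvexOn ℝ Set.univ f)
    (hintf : ∀ k : ℕ,
      Integrable (fun τ => kMaxSum (fun j => f ((hD τ).eigenvalues j)) k) ν)
    (hmaj : ∀ k : ℕ, k ≤ n →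
      kMaxSum hC.eigenvalues k ≤ ∫ τ, kMaxSum ((hD τ).eigenvalues) k ∂ν) :
    ∀ k : ℕ, 1 ≤ k → k ≤ n →
      kMaxSum (fun j => f (hC.eigenvalues j)) k ≤
        ∫ τ, kMaxSum (fun j => f ((hD τ).eigenvalues j)) k ∂ν := by
  intro k hk1 hkn
  have hn : 1 ≤ n := le_trans hk1 hkn
  obtain ⟨φ, hφmono, hφ0, hsub⟩ := exists_subgradient f hf_conv hf_mono
  obtain ⟨πC, hπC⟩ := exists_antitone_perm hC.eigenvalues
  have hπCf : Antitone (fun j => f (hC.eigenvalues (πC j))) :=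
    fun a b hab => hf_mono (hπC hab)
  choose πD hπD using fun τ => exists_antitone_perm ((hD τ).eigenvalues)
  have hπDf : ∀ τ, Antitone (fun j => f ((hD τ).eigenvalues (πD τ j))) :=
    fun τ a b hab => hf_mono (hπD τ hab)
  set u : Fin n → ℝ := fun j => hC.eigenvalues (πC j) with hu
  set g : Fin n → Ω → ℝ := fun j τ => (hD τ).eigenvalues (πD τ j) with hg
  -- expression of g and f ∘ g as differences of kMaxSums, for integrability
  have hgeq : ∀ (j : Fin n) (τ : Ω), g j τ =
      kMaxSum ((hD τ).eigenvalues) ((j : ℕ)+1) - kMaxSum ((hD τ).eigenvalues) (j : ℕ) := by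
    intro j τ
    rw [kMaxSum_succ _ (πD τ) (hπD τ) j.isLt]
    simp [hg]
  have hfgeq : ∀ (j : Fin n) (τ : Ω), f (g j τ) =
      kMaxSum (fun i => f ((hD τ).eigenvalues i)) ((j : ℕ)+1) -
        kMaxSum (fun i => f ((hD τ).eigenvalues i)) (j : ℕ) := by
    intro j τ
    rw [kMaxSum_succ _ (πD τ) (hπDf τ) j.isLt]
    simp [hg]
  have hgint : ∀ j : Fin n, Integrable (fun τ => g j τ) ν := by
    intro j
    exact ((hint ((j : ℕ)+1)).sub (hint (j : ℕ))).congr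
      (Filter.Eventually.of_forall fun τ => (hgeq j τ).symm)
  have hfgint : ∀ j : Fin n, Integrable (fun τ => f (g j τ)) ν := by
    intro j
    exact ((hintf ((j : ℕ)+1)).sub (hintf (j : ℕ))).congr
      (Filter.Eventually.of_forall fun τ => (hfgeq j τ).symm)
  set w : Fin n → ℝ := fun j => ∫ τ, g j τ ∂ν with hw
  have hwanti : Antitone w := fun a b hab =>
    integral_mono (hgint b) (hgint a) (fun τ => (hπD τ) hab)
  -- integrated partial sums
  have hDsum : ∀ m (hm : m ≤ n),
      (∫ τ, kMaxSum ((hD τ).eigenvalues) m ∂ν) = ∑ i : Fin m, w (Fin.castLE hm i) := by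
    intro m hm
    have heq : (fun τ => kMaxSum ((hD τ).eigenvalues) m) =
        fun τ => ∑ i : Fin m, g (Fin.castLE hm i) τ := by
      funext τ
      rw [kMaxSum_eq_sorted _ (πD τ) (hπD τ) hm]
    rw [heq, integral_finset_sum _ (fun i _ => hgint _)]
  have hfDsum : ∀ m (hm : m ≤ n),
      (∫ τ, kMaxSum (fun j => f ((hD τ).eigenvalues j)) m ∂ν) =
        ∑ i : Fin m, ∫ τ, f (g (Fin.castLE hm i) τ) ∂ν := by
    intro m hm
    have heq : (fun τ => kMaxSum (fun j => f ((hD τ).eigenvalues j)) m) =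
        fun τ => ∑ i : Fin m, f (g (Fin.castLE hm i) τ) := by
      funext τ
      rw [kMaxSum_eq_sorted _ (πD τ) (hπDf τ) hm]
    rw [heq, integral_finset_sum _ (fun i _ => hfgint _)]
  -- clamped ℕ-indexed versions
  set e : ℕ → Fin n := fun i => ⟨min i (n-1), by omega⟩ with he
  have hemono : Monotone e := by
    intro a b hab
    rw [Fin.le_def]
    simp only [he]
    omega
  have heval : ∀ (i : ℕ) (h : i < n), e i = ⟨i, h⟩ := by
    intro i h
    apply Fin.ext
    simp only [he]
    omega
  set U : ℕ → ℝ := fun i => u (e i) with hU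
  set W : ℕ → ℝ := fun i => w (e i) with hW
  have hUanti : Antitone U := hπC.comp_monotone hemono
  have hWanti : Antitone W := hwanti.comp_monotone hemono
  have hUsum : ∀ m (hm : m ≤ n),
      ∑ i ∈ range m, U i = ∑ i : Fin m, u (Fin.castLE hm i) := by
    intro m hm
    rw [← Fin.sum_univ_eq_sum_range]
    apply Finset.sum_congr rfl
    intro i _
    simp only [hU]
    congr 1
    exact heval _ (lt_of_lt_of_le i.isLt hm)
  have hWsum : ∀ m (hm : m ≤ n),
      ∑ i ∈ range m, W i = ∑ i : Fin m, w (Fin.castLE hm i) := by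
    intro m hm
    rw [← Fin.sum_univ_eq_sum_range]
    apply Finset.sum_congr rfl
    intro i _
    simp only [hW]
    congr 1
    exact heval _ (lt_of_lt_of_le i.isLt hm)
  -- Tomić
  have htomic : ∑ i ∈ range k, f (U i) ≤ ∑ i ∈ range k, f (W i) := by
    apply tomic f φ hφmono hφ0 hsub U W hUanti k
    intro m hm
    have hmn : m ≤ n := le_trans hm hkn
    rw [hUsum m hmn, hWsum m hmn, ← hDsum m hmn,
      ← kMaxSum_eq_sorted hC.eigenvalues πC hπC hmn]
    exact hmaj m hmn
  -- assemble
  rw [kMaxSum_eq_sorted (fun j => f (hC.eigenvalues j)) πC hπCf hkn, hfDsum k hkn]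
  calc ∑ i : Fin k, f (u (Fin.castLE hkn i))
      = ∑ i ∈ range k, f (U i) := by
        rw [← Fin.sum_univ_eq_sum_range]
        apply Finset.sum_congr rfl
        intro i _
        simp only [hU]
        congr 2
        exact (heval _ (lt_of_lt_of_le i.isLt hkn)).symm
    _ ≤ ∑ i ∈ range k, f (W i) := htomic
    _ = ∑ i : Fin k, f (w (Fin.castLE hkn i)) := by
        rw [← Fin.sum_univ_eq_sum_range]
        apply Finset.sum_congr rfl
        intro i _
        simp only [hW]
        congr 2
        exact heval _ (lt_of_lt_of_le i.isLt hkn)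
    _ ≤ ∑ i : Fin k, ∫ τ, f (g (Fin.castLE hkn i) τ) ∂ν := by
        apply Finset.sum_le_sum
        intro i _
        exact jensen_sub ν f φ hsub _ (hgint _) (hfgint _)
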